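/- Let v be a monotone valuation on bundles of m goods with v(∅) = 0 satisfying gross substitutes, and let p ∈ (ℝ≥0)^m be any price vector. Then the minimum demand correspondence D*(p) is the set of bases of a matroid: there exists a matroid on the ground set {1,…,m} whose set of bases is exactly D*(p). -/

import Mathlib

set_option maxHeartbeats 1000000


open Finset

noncomputable section

/-- Quasi-linear utility of a bundle at prices `p`. -/
def utilB {m : ℕ} (v : Finset (Fin m) → ℝ) (p : Fin m → ℝ) (S : Finset (Fin m)) : ℝ :=
  v S - ∑ g ∈ S, p g

/-- Demand correspondence over bundles: utility-maximizing bundles. -/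
def DemB {m : ℕ} (v : Finset (Fin m) → ℝ) (p : Fin m → ℝ) : Set (Finset (Fin m)) :=
  {S | ∀ T, utilB v p T ≤ utilB v p S}

/-- The gross substitutes condition. -/
def GrossSubstitutes {m : ℕ} (v : Finset (Fin m) → ℝ) : Prop :=
  ∀ p p' : Fin m → ℝ, (∀ g, 0 ≤ p g) → (∀ g, p g ≤ p' g) →
    ∀ S ∈ DemB v p, ∃ S' ∈ DemB v p', ∀ g ∈ S, p g = p' g → g ∈ S'

/-- Minimum demand correspondence: demanded bundles no proper subset of which is demanded. -/
def DstarB {m : ℕ} (v : Finset (Fin m) → ℝ) (p : Fin m → ℝ) : Set (Finset (Fin m)) :=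
  {S | S ∈ DemB v p ∧ ∀ T ⊂ S, T ∉ DemB v p}

namespace GSAux
open Classical
variable {m : ℕ} {v : Finset (Fin m) → ℝ}

lemma sum_ind (U A : Finset (Fin m)) (c : ℝ) :
    (∑ g ∈ U, if g ∈ A then c else 0) = ((U ∩ A).card : ℝ) * c := by
  rw [Finset.sum_ite_mem, Finset.sum_const, nsmul_eq_mul]

lemma subset_of_inter_compl_empty {U A : Finset (Fin m)} (h : U ∩ ((univ : Finset (Fin m)) \ A) = ∅) :
    U ⊆ A := by
  intro g hg
  by_contra hga
  have : g ∈ U ∩ ((univ : Finset (Fin m)) \ A) := by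
    simp [Finset.mem_inter, Finset.mem_sdiff, hg, hga]
  simp [h] at this

lemma subset_of_notmem {U W : Finset (Fin m)} {y : Fin m} (h : U ⊆ insert y W) (hy : y ∉ U) :
    U ⊆ W := by
  have := Finset.subset_insert_iff.mp h
  rwa [Finset.erase_eq_of_notMem hy] at this

/-- utility under a price with three indicator components -/
lemma util_price3 (w1 w2 w3 : ℝ) (x y : Fin m) (O U : Finset (Fin m)) :
    utilB v (fun g => (if g = x then w1 else 0) + (if g = y then w2 else 0) +
      (if g ∈ O then w3 else 0)) U
    = v U - ((if x ∈ U then w1 else 0) + (if y ∈ U then w2 else 0) + ((U ∩ O).card : ℝ) * w3) := by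
  unfold utilB
  rw [Finset.sum_add_distrib, Finset.sum_add_distrib, Finset.sum_ite_eq' U x (fun _ => w1),
    Finset.sum_ite_eq' U y (fun _ => w2), sum_ind]

variable (hmono : ∀ A B : Finset (Fin m), A ⊆ B → v A ≤ v B)
    (hempty : v ∅ = 0) (hGS : GrossSubstitutes v)

include hmono hempty hGS in
/-- GS + monotone implies submodularity -/
lemma submod {X : Finset (Fin m)} {x y : Fin m} (hx : x ∉ X) (hy : y ∉ X) (hxy : x ≠ y) :
    v (insert y (insert x X)) + v X ≤ v (insert x X) + v (insert y X) := by
  by_contra hcon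
  push_neg at hcon
  set Xx := insert x X with hXx
  set Xy := insert y X with hXy
  set Xxy := insert y Xx with hXxy
  set r := v X with hr
  set a := v Xx - r with ha
  set b := v Xy - r with hb
  set d := v Xxy - v Xx with hd
  have hba : b < d := by simp only [ha, hb, hd] at *; linarith
  set ε := (d - b)/2 with hε
  have hεpos : 0 < ε := by simp [hε]; linarith
  have hvnn : ∀ U, 0 ≤ v U := fun U => hempty ▸ hmono ∅ U (Finset.empty_subset U)
  have hvuniv : ∀ U, v U ≤ v univ := fun U => hmono _ _ (Finset.subset_univ U)
  have ha0 : 0 ≤ a := by simp [ha]; exact hmono _ _ (Finset.subset_insert _ _)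
  have hb0 : 0 ≤ b := by simp [hb]; exact hmono _ _ (Finset.subset_insert _ _)
  have hd0 : 0 ≤ d := by simp [hd]; exact hmono _ _ (Finset.subset_insert _ _)
  set M : ℝ := 2 * v univ + 1 with hM
  have haU : a ≤ v univ := by have := hvuniv Xx; have := hvnn X; simp [ha]; linarith
  have hdU : d ≤ v univ := by have := hvuniv Xxy; have := hvnn Xx; simp [hd]; linarith
  have hMpos : 0 < M := by have := hvnn univ; simp [hM]; linarith
  set πx := a + ε/2 with hπx
  set πy := d - ε with hπy
  have hπx0 : 0 ≤ πx := by simp [hπx]; linarith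
  have hπy0 : 0 ≤ πy := by simp [hπy, hε]; linarith
  set Out := (univ : Finset (Fin m)) \ Xxy with hOut
  set q : Fin m → ℝ := fun g => (if g = x then πx else 0) + (if g = y then πy else 0) +
      (if g ∈ Out then M else 0) with hq
  have hXxyv : v Xxy = r + a + d := by simp [ha, hd]
  have hxXxy : x ∈ Xxy := Finset.mem_insert_of_mem (Finset.mem_insert_self _ _)
  have hyXxy : y ∈ Xxy := Finset.mem_insert_self _ _
  have hinter_self : ∀ A : Finset (Fin m), A ∩ ((univ : Finset (Fin m)) \ A) = ∅ := by
    intro A; ext g; simp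
  have hq0 : ∀ g, 0 ≤ q g := by
    intro g; simp only [hq]
    have h1 : 0 ≤ (if g = x then πx else 0) := by by_cases h : g = x <;> simp [h, hπx0]
    have h2 : 0 ≤ (if g = y then πy else 0) := by by_cases h : g = y <;> simp [h, hπy0]
    have h3 : 0 ≤ (if g ∈ Out then M else 0) := by
      by_cases h : g ∈ Out <;> simp [h]; linarith
    linarith
  have hcomm : Xxy = insert x Xy := by rw [hXxy, hXx, hXy, Finset.insert_comm]
  have hqXxy : utilB v q Xxy = r + ε/2 := by
    rw [hq, util_price3, hinter_self]
    simp [hxXxy, hyXxy, hXxyv, hπx, hπy]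
    ring
  have hub : ∀ U, utilB v q U ≤ r + ε/2 := by
    intro U
    rw [hq, util_price3]
    by_cases hUO : (U ∩ Out).card = 0
    · have hUsub : U ⊆ Xxy := subset_of_inter_compl_empty (Finset.card_eq_zero.mp hUO)
      rw [hUO]
      by_cases hxU : x ∈ U <;> by_cases hyU : y ∈ U
      · have hv := hmono U Xxy hUsub
        simp only [hxU, hyU, if_pos]
        simp only [Nat.cast_zero]
        rw [hXxyv] at hv
        simp only [hπx, hπy]; linarith
      · have hUX : U ⊆ Xx := subset_of_notmem hUsub hyU
        have hv := hmono U Xx hUX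
        simp only [hxU, if_pos, hyU, if_neg, not_false_iff]
        simp only [Nat.cast_zero, hπx]
        have : v Xx = r + a := by simp [ha]
        linarith
      · have hUX : U ⊆ Xy := subset_of_notmem (hcomm ▸ hUsub) hxU
        have hv := hmono U Xy hUX
        simp only [hxU, if_neg, not_false_iff, hyU, if_pos]
        simp only [Nat.cast_zero, hπy]
        have : v Xy = r + b := by simp [hb]
        have : ε = (d - b)/2 := hε
        linarith
      · have hUX : U ⊆ X := subset_of_notmem (subset_of_notmem hUsub hyU) hxU
        have hv := hmono U X hUX
        simp only [hxU, if_neg, not_false_iff, hyU]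
        simp only [Nat.cast_zero]
        linarith
    · have h1 : (1:ℝ) ≤ ((U ∩ Out).card : ℝ) := by
        exact_mod_cast Nat.one_le_iff_ne_zero.mpr hUO
      have h2 : 0 ≤ (if x ∈ U then πx else 0) := by by_cases h : x ∈ U <;> simp [h, hπx0]
      have h3 : 0 ≤ (if y ∈ U then πy else 0) := by by_cases h : y ∈ U <;> simp [h, hπy0]
      have h4 := hvuniv U
      have h5 := hvnn X
      have h6 : M ≤ ((U ∩ Out).card : ℝ) * M := le_mul_of_one_le_left (le_of_lt hMpos) h1
      simp only [hM] at h6 ⊢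
      linarith
  have hS0dem : Xxy ∈ DemB v q := by
    intro U
    rw [hqXxy]; exact hub U
  -- second price: raise x's price to M
  set q' : Fin m → ℝ := fun g => (if g = x then M else 0) + (if g = y then πy else 0) +
      (if g ∈ Out then M else 0) with hq'
  have hqq' : ∀ g, q g ≤ q' g := by
    intro g; simp only [hq, hq']
    by_cases h : g = x <;> simp [h, hπx]
    linarith [hvnn univ, hεpos, haU, hdU, hb0]
  obtain ⟨S', hS'dem, hkeep⟩ := hGS q q' hq0 hqq' Xxy hS0dem
  have hyS' : y ∈ S' := by
    apply hkeep y hyXxy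
    simp only [hq, hq']
    have : y ≠ x := fun h => hxy h.symm
    simp [this]
  -- compute utility of X at q'
  have hXOut : X ∩ Out = ∅ := by
    have hXsub : X ⊆ Xxy := by
      rw [hXxy, hXx]; exact (Finset.subset_insert _ _).trans (Finset.subset_insert _ _)
    ext g; simp only [Finset.mem_inter, hOut, Finset.mem_sdiff, Finset.mem_univ, true_and,
      Finset.notMem_empty, iff_false, not_and, not_not]
    exact fun hg => hXsub hg
  have hq'X : utilB v q' X = r := by
    rw [hq', util_price3, hXOut]
    simp [hx, hy]
    rfl
  have hle := hS'dem X
  rw [hq'X] at hle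
  -- upper bound utility of S' at q' : strictly below r since y ∈ S'
  have hq'S' : utilB v q' S' < r := by
    rw [hq', util_price3]
    by_cases hxS' : x ∈ S'
    · have h2 : 0 ≤ (if y ∈ S' then πy else 0) := by by_cases h : y ∈ S' <;> simp [h, hπy0]
      have h3 : 0 ≤ ((S' ∩ Out).card : ℝ) * M := mul_nonneg (Nat.cast_nonneg _) (le_of_lt hMpos)
      have h4 := hvuniv S'
      have h5 := hvnn X
      simp only [hxS', if_pos]
      linarith
    · by_cases hSO : (S' ∩ Out).card = 0
      · have hUsub : S' ⊆ Xxy := subset_of_inter_compl_empty (Finset.card_eq_zero.mp hSO)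
        have hUX : S' ⊆ Xy := subset_of_notmem (hcomm ▸ hUsub) hxS'
        have hv := hmono S' Xy hUX
        have : v Xy = r + b := by simp [hb]
        simp only [hxS', if_neg, not_false_iff, hyS', if_pos, hSO]
        simp only [Nat.cast_zero, hπy]
        have hεd : ε = (d - b)/2 := hε
        linarith
      · have h1 : (1:ℝ) ≤ ((S' ∩ Out).card : ℝ) := by
          exact_mod_cast Nat.one_le_iff_ne_zero.mpr hSO
        have h3 : 0 ≤ (if y ∈ S' then πy else 0) := by by_cases h : y ∈ S' <;> simp [h, hπy0]
        have h4 := hvuniv S'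
        have h5 := hvnn X
        have h6 : M ≤ ((S' ∩ Out).card : ℝ) * M := le_mul_of_one_le_left (le_of_lt hMpos) h1
        simp only [hxS', if_neg, not_false_iff]
        linarith
  linarith

/-- utility under a price with four indicator components -/
lemma util_price4 (w1 w2 w3 w4 : ℝ) (x y z : Fin m) (O U : Finset (Fin m)) :
    utilB v (fun g => (if g = x then w1 else 0) + (if g = y then w2 else 0) +
      (if g = z then w3 else 0) + (if g ∈ O then w4 else 0)) U
    = v U - ((if x ∈ U then w1 else 0) + (if y ∈ U then w2 else 0) +
        (if z ∈ U then w3 else 0) + ((U ∩ O).card : ℝ) * w4) := by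
  unfold utilB
  rw [Finset.sum_add_distrib, Finset.sum_add_distrib, Finset.sum_add_distrib,
    Finset.sum_ite_eq' U x (fun _ => w1), Finset.sum_ite_eq' U y (fun _ => w2),
    Finset.sum_ite_eq' U z (fun _ => w3), sum_ind]

include hmono hempty hGS in
/-- GS + monotone implies the triple condition -/
lemma triple {A : Finset (Fin m)} {x y z : Fin m} (hx : x ∉ A) (hy : y ∉ A) (hz : z ∉ A)
    (hxy : x ≠ y) (hxz : x ≠ z) (hyz : y ≠ z) :
    v (insert y (insert x A)) + v (insert z A) ≤
      max (v (insert z (insert x A)) + v (insert y A))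
          (v (insert z (insert y A)) + v (insert x A)) := by
  by_contra hcon
  push_neg at hcon
  have hc1 : v (insert z (insert x A)) + v (insert y A) < v (insert y (insert x A)) + v (insert z A) :=
    lt_of_le_of_lt (le_max_left _ _) hcon
  have hc2 : v (insert z (insert y A)) + v (insert x A) < v (insert y (insert x A)) + v (insert z A) :=
    lt_of_le_of_lt (le_max_right _ _) hcon
  set Ax := insert x A with hAx
  set Ay := insert y A with hAy
  set Az := insert z A with hAz
  set Axy := insert y Ax with hAxy
  set Axz := insert z Ax with hAxz
  set Ayz := insert z Ay with hAyz
  set Axyz := insert z Axy with hAxyz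
  have hyx : Axy = insert x Ay := by rw [hAxy, hAx, hAy, Finset.insert_comm]
  have hzx : Axz = insert x Az := by rw [hAxz, hAx, hAz, Finset.insert_comm]
  have hzy : Ayz = insert y Az := by rw [hAyz, hAy, hAz, Finset.insert_comm]
  have hAxyz2 : Axyz = insert y Axz := by rw [hAxyz, hAxy, hAxz, Finset.insert_comm]
  have hAxyz3 : Axyz = insert x Ayz := by
    rw [hAxyz, hyx, hAyz, Finset.insert_comm z x]
  set e := v A with he
  set fx := v Ax with hfx
  set fy := v Ay with hfy
  set fz := v Az with hfz
  set fxy := v Axy with hfxy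
  set fxz := v Axz with hfxz
  set fyz := v Ayz with hfyz
  set fxyz := v Axyz with hfxyz
  set s1 := fxy + fz - fxz - fy with hs1
  set s2 := fxy + fz - fyz - fx with hs2
  have hs1pos : 0 < s1 := by simp only [hs1]; linarith
  have hs2pos : 0 < s2 := by simp only [hs2]; linarith
  have hvnn : ∀ U, 0 ≤ v U := fun U => hempty ▸ hmono ∅ U (Finset.empty_subset U)
  have hvuniv : ∀ U, v U ≤ v univ := fun U => hmono _ _ (Finset.subset_univ U)
  have hfyxy : fy ≤ fxy := hmono Ay Axy (by rw [hyx]; exact Finset.subset_insert _ _)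
  have hfxxy : fx ≤ fxy := hmono Ax Axy (Finset.subset_insert _ _)
  have hfzxz : fz ≤ fxz := hmono Az Axz (by rw [hzx]; exact Finset.subset_insert _ _)
  have hfzyz : fz ≤ fyz := hmono Az Ayz (by rw [hzy]; exact Finset.subset_insert _ _)
  have hfyyz : fy ≤ fyz := hmono Ay Ayz (Finset.subset_insert _ _)
  have hfy_lt : fy < fxy := by by_contra h; push_neg at h; simp only [hs1] at hs1pos; linarith
  have hfx_lt : fx < fxy := by by_contra h; push_neg at h; simp only [hs2] at hs2pos; linarith
  set c := fx + fy - fxy with hc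
  have hce : e ≤ c := by
    have := submod hmono hempty hGS hx hy hxy
    simp only [hc]; linarith [this]
  have hc0 : 0 ≤ c := le_trans (hvnn A) hce
  -- second submodularity instance
  have hxAz : x ∉ Az := by simp [hAz, Finset.mem_insert, hxz, hx]
  have hyAz : y ∉ Az := by simp [hAz, Finset.mem_insert, hyz, hy]
  have hsubb : fxyz + fz ≤ fxz + fyz := by
    have h := submod hmono hempty hGS hxAz hyAz hxy
    have e1 : insert y (insert x Az) = Axyz := by
      rw [← hzx, hAxyz2]
    have e2 : insert x Az = Axz := hzx.symm
    have e3 : insert y Az = Ayz := hzy.symm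
    rw [e1, e2, e3] at h
    simp only [hfxyz, hfz, hfxz, hfyz]; linarith
  set ε := min (min s1 s2) (min (fxy - fy) (fxy - fx)) / 2 with hεdef
  have hεpos : 0 < ε := by
    apply div_pos _ (by norm_num)
    apply lt_min (lt_min hs1pos hs2pos) (lt_min (by linarith) (by linarith))
  have hεs1 : 2 * ε ≤ s1 := by
    have : min (min s1 s2) (min (fxy - fy) (fxy - fx)) ≤ s1 :=
      le_trans (min_le_left _ _) (min_le_left _ _)
    simp only [hεdef]; linarith
  have hεs2 : 2 * ε ≤ s2 := by
    have : min (min s1 s2) (min (fxy - fy) (fxy - fx)) ≤ s2 :=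
      le_trans (min_le_left _ _) (min_le_right _ _)
    simp only [hεdef]; linarith
  have hεfy : 2 * ε ≤ fxy - fy := by
    have : min (min s1 s2) (min (fxy - fy) (fxy - fx)) ≤ fxy - fy :=
      le_trans (min_le_right _ _) (min_le_left _ _)
    simp only [hεdef]; linarith
  have hεfx : 2 * ε ≤ fxy - fx := by
    have : min (min s1 s2) (min (fxy - fy) (fxy - fx)) ≤ fxy - fx :=
      le_trans (min_le_right _ _) (min_le_right _ _)
    simp only [hεdef]; linarith
  set πx := fxy - fy - ε with hπx
  set πy := fxy - fx - ε/2 with hπy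
  set πz := fz - c - ε with hπz
  have hπx0 : 0 ≤ πx := by simp only [hπx]; linarith
  have hπy0 : 0 ≤ πy := by simp only [hπy]; linarith
  have hπz0 : 0 ≤ πz := by linarith
  set M : ℝ := 2 * v univ + 1 with hM
  have hMpos : 0 < M := by have := hvnn univ; simp only [hM]; linarith
  clear_value e fx fy fz fxy fxz fyz fxyz s1 s2 c ε πx πy πz M
  set Out := (univ : Finset (Fin m)) \ Axyz with hOut
  set q : Fin m → ℝ := fun g => (if g = x then πx else 0) + (if g = y then πy else 0) +
      (if g = z then πz else 0) + (if g ∈ Out then M else 0) with hq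
  have hq0 : ∀ g, 0 ≤ q g := by
    intro g; simp only [hq]
    have h1 : 0 ≤ (if g = x then πx else 0) := by by_cases h : g = x <;> simp [h, hπx0]
    have h2 : 0 ≤ (if g = y then πy else 0) := by by_cases h : g = y <;> simp [h, hπy0]
    have h3 : 0 ≤ (if g = z then πz else 0) := by by_cases h : g = z <;> simp [h, hπz0]
    have h4 : 0 ≤ (if g ∈ Out then M else 0) := by
      by_cases h : g ∈ Out <;> simp [h]; linarith
    linarith
  have hinter_self : ∀ B : Finset (Fin m), B ⊆ Axyz → (B ∩ Out).card = 0 := by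
    intro B hB
    rw [Finset.card_eq_zero]
    ext g; simp only [Finset.mem_inter, hOut, Finset.mem_sdiff, Finset.mem_univ, true_and,
      Finset.notMem_empty, iff_false, not_and, not_not]
    exact fun hg => hB hg
  have hAxysub : Axy ⊆ Axyz := Finset.subset_insert _ _
  have hAzsub : Az ⊆ Axyz := by
    intro g hg
    rcases Finset.mem_insert.mp hg with h | h
    · rw [h, hAxyz]; exact Finset.mem_insert_self _ _
    · rw [hAxyz, hAxy, hAx]
      exact Finset.mem_insert_of_mem (Finset.mem_insert_of_mem (Finset.mem_insert_of_mem h))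
  have hxAxy : x ∈ Axy := Finset.mem_insert_of_mem (Finset.mem_insert_self _ _)
  have hyAxy : y ∈ Axy := Finset.mem_insert_self _ _
  have hzAxy : z ∉ Axy := by
    simp [hAxy, hAx, Finset.mem_insert, Ne.symm hyz, Ne.symm hxz, hz]
  have hqAxy : utilB v q Axy = c + 3*ε/2 := by
    rw [hq, util_price4, hinter_self Axy hAxysub]
    simp only [hxAxy, if_pos, hyAxy, hzAxy, if_neg, not_false_iff, Nat.cast_zero]
    simp only [hπx, hπy, hc, ← hfxy]
    ring
  have hub : ∀ U, utilB v q U ≤ c + 3*ε/2 := by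
    intro U
    rw [hq, util_price4]
    by_cases hUO : (U ∩ Out).card = 0
    · have hUsub : U ⊆ Axyz := subset_of_inter_compl_empty (Finset.card_eq_zero.mp hUO)
      rw [hUO]
      by_cases hxU : x ∈ U <;> by_cases hyU : y ∈ U <;> by_cases hzU : z ∈ U
      · -- xyz
        have hv := hmono U Axyz hUsub
        simp only [hxU, hyU, hzU, if_pos, Nat.cast_zero]
        simp only [hπx, hπy, hπz, hc]
        simp only [← hfxyz] at hv
        linarith
      · -- xy
        have hUX : U ⊆ Axy := subset_of_notmem hUsub hzU
        have hv := hmono U Axy hUX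
        simp only [hxU, hyU, if_pos, hzU, if_neg, not_false_iff, Nat.cast_zero]
        simp only [hπx, hπy, hc]
        simp only [← hfxy] at hv
        linarith
      · -- xz
        have hUX : U ⊆ Axz := subset_of_notmem (hAxyz2 ▸ hUsub) hyU
        have hv := hmono U Axz hUX
        simp only [hxU, hzU, if_pos, hyU, if_neg, not_false_iff, Nat.cast_zero]
        linarith
      · -- x
        have hUX : U ⊆ Ax := subset_of_notmem (subset_of_notmem hUsub hzU) hyU
        have hv := hmono U Ax hUX
        simp only [hxU, if_pos, hyU, hzU, if_neg, not_false_iff, Nat.cast_zero]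
        simp only [hπx, hc]
        simp only [← hfx] at hv
        linarith
      · -- yz
        have hUX : U ⊆ Ayz := subset_of_notmem (hAxyz3 ▸ hUsub) hxU
        have hv := hmono U Ayz hUX
        simp only [hyU, hzU, if_pos, hxU, if_neg, not_false_iff, Nat.cast_zero]
        linarith
      · -- y
        have hUX : U ⊆ Ay := subset_of_notmem (hyx ▸ subset_of_notmem hUsub hzU) hxU
        have hv := hmono U Ay hUX
        simp only [hyU, if_pos, hxU, hzU, if_neg, not_false_iff, Nat.cast_zero]
        simp only [hπy, hc]
        simp only [← hfy] at hv
        linarith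
      · -- z
        have hUX : U ⊆ Az := subset_of_notmem (hzy ▸ subset_of_notmem (hAxyz3 ▸ hUsub) hxU) hyU
        have hv := hmono U Az hUX
        simp only [hzU, if_pos, hxU, hyU, if_neg, not_false_iff, Nat.cast_zero]
        simp only [hπz]
        simp only [← hfz] at hv
        linarith
      · -- none
        have hUX : U ⊆ A := subset_of_notmem
          (subset_of_notmem (subset_of_notmem hUsub hzU) hyU) hxU
        have hv := hmono U A hUX
        simp only [hxU, hyU, hzU, if_neg, not_false_iff, Nat.cast_zero]
        simp only [← he] at hv
        linarith
    · have h1 : (1:ℝ) ≤ ((U ∩ Out).card : ℝ) := by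
        exact_mod_cast Nat.one_le_iff_ne_zero.mpr hUO
      have h2 : 0 ≤ (if x ∈ U then πx else 0) := by by_cases h : x ∈ U <;> simp [h, hπx0]
      have h3 : 0 ≤ (if y ∈ U then πy else 0) := by by_cases h : y ∈ U <;> simp [h, hπy0]
      have h3' : 0 ≤ (if z ∈ U then πz else 0) := by by_cases h : z ∈ U <;> simp [h, hπz0]
      have h4 := hvuniv U
      have h6 : M ≤ ((U ∩ Out).card : ℝ) * M := le_mul_of_one_le_left (le_of_lt hMpos) h1
      simp only [hM] at h6 ⊢
      have h7 := hvnn A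
      have h8 : e ≤ v univ := he ▸ hvuniv A
      have h9 : (0:ℝ) ≤ v univ := hvnn univ
      linarith [hc0, hce, hεpos]
  have hS0dem : Axy ∈ DemB v q := by
    intro U; rw [hqAxy]; exact hub U
  set q' : Fin m → ℝ := fun g => (if g = x then M else 0) + (if g = y then πy else 0) +
      (if g = z then πz else 0) + (if g ∈ Out then M else 0) with hq'
  have hqq' : ∀ g, q g ≤ q' g := by
    intro g; simp only [hq, hq']
    by_cases h : g = x <;> simp [h, hπx]
    have := hvuniv Axy
    have := hvnn Ay
    simp only [hM, ← hfxy, ← hfy]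
    linarith
  obtain ⟨S', hS'dem, hkeep⟩ := hGS q q' hq0 hqq' Axy hS0dem
  have hyS' : y ∈ S' := by
    apply hkeep y hyAxy
    simp only [hq, hq']
    have : y ≠ x := fun h => hxy h.symm
    simp [this]
  have hzAz : z ∈ Az := Finset.mem_insert_self _ _
  have hq'Az : utilB v q' Az = c + ε := by
    rw [hq', util_price4, hinter_self Az hAzsub]
    simp only [hxAz, hyAz, if_neg, not_false_iff, hzAz, if_pos, Nat.cast_zero]
    simp only [hπz, ← hfz]
    ring
  have hle := hS'dem Az
  rw [hq'Az] at hle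
  have hq'S' : utilB v q' S' < c + ε := by
    rw [hq', util_price4]
    have h3' : 0 ≤ (if z ∈ S' then πz else 0) := by by_cases h : z ∈ S' <;> simp [h, hπz0]
    by_cases hxS' : x ∈ S'
    · have h3 : 0 ≤ ((S' ∩ Out).card : ℝ) * M := by positivity
      have h4 := hvuniv S'
      rw [if_pos hxS', if_pos hyS']
      have h10 : (0:ℝ) ≤ v univ := hvnn univ
      simp only [hM] at *
      linarith
    · by_cases hSO : (S' ∩ Out).card = 0
      · have hUsub : S' ⊆ Axyz := subset_of_inter_compl_empty (Finset.card_eq_zero.mp hSO)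
        have hS'yz : S' ⊆ Ayz := subset_of_notmem (hAxyz3 ▸ hUsub) hxS'
        rw [hSO]
        by_cases hzS' : z ∈ S'
        · have hv := hmono S' Ayz hS'yz
          simp only [hyS', hzS', if_pos, hxS', if_neg, not_false_iff, Nat.cast_zero]
          linarith [hv, hfyz, hπy, hπz, hc, hs2, hεs2, hεpos]
        · have haux : S' ⊆ insert z Ay := by rw [← hAyz]; exact hS'yz
          have hS'y : S' ⊆ Ay := subset_of_notmem haux hzS'
          have hv := hmono S' Ay hS'y
          simp only [hyS', if_pos, hxS', hzS', if_neg, not_false_iff, Nat.cast_zero]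
          simp only [hπy, hc]
          simp only [← hfy] at hv
          linarith
      · have h1 : (1:ℝ) ≤ ((S' ∩ Out).card : ℝ) := by
          exact_mod_cast Nat.one_le_iff_ne_zero.mpr hSO
        have h2 : 0 ≤ (if x ∈ S' then M else 0) := by
          by_cases h : x ∈ S' <;> simp [h]; linarith
        have h3 : 0 ≤ (if y ∈ S' then πy else 0) := by by_cases h : y ∈ S' <;> simp [h, hπy0]
        have h4 := hvuniv S'
        have h6 : M ≤ ((S' ∩ Out).card : ℝ) * M := le_mul_of_one_le_left (le_of_lt hMpos) h1
        simp only [hM] at h6 h2 ⊢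
        have h7 := hvnn A
        have h8 : e ≤ v univ := he ▸ hvuniv A
        have h9 : (0:ℝ) ≤ v univ := hvnn univ
        linarith [hc0, hce, hεpos]
  linarith


include hmono hempty hGS in
/-- triple condition in utility terms, pair {y,z} against single x -/
lemma tripleU (p : Fin m → ℝ) {A : Finset (Fin m)} {x y z : Fin m}
    (hx : x ∉ A) (hy : y ∉ A) (hz : z ∉ A) (hxy : x ≠ y) (hxz : x ≠ z) (hyz : y ≠ z) :
    utilB v p (insert z (insert y A)) + utilB v p (insert x A) ≤
      max (utilB v p (insert x (insert y A)) + utilB v p (insert z A))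
          (utilB v p (insert x (insert z A)) + utilB v p (insert y A)) := by
  have ht := triple hmono hempty hGS (A := A) (x := y) (y := z) (z := x) hy hz hx hyz
    (Ne.symm hxy) (Ne.symm hxz)
  have hyxA : y ∉ insert x A := by simp [Finset.mem_insert, hy, Ne.symm hxy]
  have hzxA : z ∉ insert x A := by simp [Finset.mem_insert, hz, Ne.symm hxz]
  have hzyA : z ∉ insert y A := by simp [Finset.mem_insert, hz, Ne.symm hyz]
  have hxyA : x ∉ insert y A := by simp [Finset.mem_insert, hx, hxy]
  have hxzA : x ∉ insert z A := by simp [Finset.mem_insert, hx, hxz]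
  unfold utilB
  rw [Finset.sum_insert hzyA, Finset.sum_insert hy, Finset.sum_insert hx,
    Finset.sum_insert hxyA, Finset.sum_insert hy, Finset.sum_insert hz,
    Finset.sum_insert hxzA, Finset.sum_insert hz]
  rcases le_max_iff.mp ht with h | h
  · apply le_max_iff.mpr; left; linarith
  · apply le_max_iff.mpr; right; linarith

/-- utility at a base price plus three indicator components -/
lemma util_price3p (p : Fin m → ℝ) (w1 w2 w3 : ℝ) (x : Fin m) (B O U : Finset (Fin m)) :
    utilB v (fun g => p g + ((if g = x then w1 else 0) + (if g ∈ B then w2 else 0) +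
      (if g ∈ O then w3 else 0))) U
    = utilB v p U - ((if x ∈ U then w1 else 0) + ((U ∩ B).card : ℝ) * w2 +
        ((U ∩ O).card : ℝ) * w3) := by
  unfold utilB
  rw [Finset.sum_add_distrib, Finset.sum_add_distrib, Finset.sum_add_distrib,
    Finset.sum_ite_eq' U x (fun _ => w1), sum_ind, sum_ind]
  ring


/-- utility at a base price plus two indicator components -/
lemma util_price2p (p : Fin m → ℝ) (w1 w2 : ℝ) (x : Fin m) (B U : Finset (Fin m)) :
    utilB v (fun g => p g + ((if g = x then w1 else 0) + (if g ∈ B then w2 else 0))) U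
    = utilB v p U - ((if x ∈ U then w1 else 0) + ((U ∩ B).card : ℝ) * w2) := by
  unfold utilB
  rw [Finset.sum_add_distrib, Finset.sum_add_distrib,
    Finset.sum_ite_eq' U x (fun _ => w1), sum_ind]
  ring

include hmono hempty hGS in
lemma step {p : Fin m → ℝ} (hp : ∀ g, 0 ≤ p g) {S : Finset (Fin m)} {x : Fin m}
    (hS : S ∈ DemB v p) (hxS : x ∈ S) {Mx γ Δ : ℝ}
    (hMx : ∀ U, utilB v p U ≤ Mx) (hSMx : utilB v p S = Mx)
    (hγ : 0 < γ) (hγle : ∀ U, U ∉ DemB v p → utilB v p U ≤ Mx - γ)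
    (hΔ : ∀ U, Mx - Δ ≤ utilB v p U)
    (hA : S.erase x ∉ DemB v p)
    {T' : Finset (Fin m)} (hT' : T' ∈ DemB v p) (hxT' : x ∉ T') :
    (∃ y, y ∈ T' ∧ y ∉ S ∧ insert y (S.erase x) ∈ DemB v p) ∨
    (∃ S', S' ∈ DemB v p ∧ x ∉ S' ∧ S' \ S ⊆ T' \ S ∧
      (S' \ S).card < (T' \ S).card ∧ S.erase x ⊆ S') := by
  classical
  have hdem_eq : ∀ U, U ∈ DemB v p → utilB v p U = Mx :=
    fun U hU => le_antisymm (hMx U) (hSMx ▸ hU S)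
  have hdem_of_eq : ∀ U, utilB v p U = Mx → U ∈ DemB v p := by
    intro U hU T''
    rw [hU]; exact hMx T''
  have hΔ0 : 0 ≤ Δ := by have := hΔ S; linarith
  set R := T' \ S with hR
  have hRS : ∀ g ∈ R, g ∉ S := fun g hg => (Finset.mem_sdiff.mp hg).2
  have hRT : R ⊆ T' := Finset.sdiff_subset
  have hxR : x ∉ R := fun h => hRS x h hxS
  set F : Finset (Finset (Fin m)) :=
    (S ∪ T').powerset.filter (fun U => U ∈ DemB v p ∧ x ∉ U) with hF
  have hFmem : ∀ U, U ⊆ S ∪ T' → U ∈ DemB v p → x ∉ U → U ∈ F := by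
    intro U h1 h2 h3
    rw [hF, Finset.mem_filter, Finset.mem_powerset]
    exact ⟨h1, h2, h3⟩
  have hFprop : ∀ U ∈ F, U ⊆ S ∪ T' ∧ U ∈ DemB v p ∧ x ∉ U := by
    intro U hU
    rw [hF, Finset.mem_filter, Finset.mem_powerset] at hU
    exact ⟨hU.1, hU.2.1, hU.2.2⟩
  have hTF : T' ∈ F := hFmem T' Finset.subset_union_right hT' hxT'
  have hFne : ((F.image fun U => (U ∩ R).card)).Nonempty := ⟨_, Finset.mem_image_of_mem _ hTF⟩
  set t₀ := ((F.image fun U => (U ∩ R).card)).min' hFne with ht₀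
  have ht₀le : ∀ U ∈ F, t₀ ≤ (U ∩ R).card :=
    fun U hU => Finset.min'_le _ _ (Finset.mem_image_of_mem _ hU)
  have htR : t₀ ≤ R.card := by
    have := ht₀le T' hTF
    rwa [Finset.inter_eq_right.mpr hRT] at this
  have ht₀m : (t₀ : ℝ) ≤ (m : ℝ) := by
    have h1 : t₀ ≤ m := le_trans htR (by
      calc R.card ≤ (univ : Finset (Fin m)).card := Finset.card_le_univ R
      _ = m := by simp)
    exact_mod_cast h1
  obtain ⟨Umin, hUminF, hUminc⟩ : ∃ U ∈ F, (U ∩ R).card = t₀ := by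
    have := Finset.min'_mem _ hFne
    rw [Finset.mem_image] at this
    obtain ⟨U, hU, hUc⟩ := this
    exact ⟨U, hU, hUc⟩
  -- prices
  set ε := γ / 2 with hε
  set δ := γ / (2 * ((m : ℝ) + 1)) with hδ
  set M₁ := Δ + γ + 1 with hM₁
  have hm1pos : (0:ℝ) < 2 * ((m:ℝ) + 1) := by positivity
  have hδpos : 0 < δ := div_pos hγ hm1pos
  have hεpos : 0 < ε := by positivity
  have hδε : ∀ k : ℕ, (k : ℝ) ≤ (m : ℝ) → (k : ℝ) * δ < ε := by
    intro k hk
    have h1 : (k : ℝ) * δ ≤ (m : ℝ) * δ := by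
      apply mul_le_mul_of_nonneg_right hk (le_of_lt hδpos)
    have h2 : (m : ℝ) * δ < ((m : ℝ) + 1) * δ := by
      apply mul_lt_mul_of_pos_right (by linarith) hδpos
    have hne : ((m:ℝ)+1) ≠ 0 := by positivity
    have h3 : ((m : ℝ) + 1) * δ = γ / 2 := by
      rw [hδ]
      field_simp
    linarith
  have ht₀δ : (t₀ : ℝ) * δ < γ / 2 := by
    have := hδε t₀ ht₀m; linarith
  clear_value ε δ M₁
  set Out := (univ : Finset (Fin m)) \ (S ∪ T') with hOut
  have hOutS : ∀ g ∈ S ∪ T', g ∉ Out := by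
    intro g hg hgo
    rw [hOut, Finset.mem_sdiff] at hgo
    exact hgo.2 hg
  set q : Fin m → ℝ := fun g => p g + ((if g = x then ε else 0) + (if g ∈ R then δ else 0) +
      (if g ∈ Out then M₁ else 0)) with hq
  have hM₁pos : 0 < M₁ := by rw [hM₁]; linarith
  have hpq : ∀ g, p g ≤ q g := by
    intro g; rw [hq]
    have h1 : 0 ≤ (if g = x then ε else 0) := by by_cases h : g = x <;> simp [h, le_of_lt hεpos]
    have h2 : 0 ≤ (if g ∈ R then δ else 0) := by by_cases h : g ∈ R <;> simp [h, le_of_lt hδpos]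
    have h3 : 0 ≤ (if g ∈ Out then M₁ else 0) := by
      by_cases h : g ∈ Out <;> simp [h, le_of_lt hM₁pos]
    simp only []
    linarith
  have hq0 : ∀ g, 0 ≤ q g := fun g => le_trans (hp g) (hpq g)
  -- maximum utility at q
  have hqmax : ∀ U, utilB v q U ≤ Mx - (t₀ : ℝ) * δ := by
    intro U
    rw [hq, util_price3p]
    have hcRnn : (0:ℝ) ≤ ((U ∩ R).card : ℝ) * δ := by positivity
    have hcOnn : (0:ℝ) ≤ ((U ∩ Out).card : ℝ) * M₁ := by positivity
    by_cases hUout : (U ∩ Out).card = 0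
    · by_cases hxU : x ∈ U
      · have := hMx U
        rw [if_pos hxU, hUout]
        push_cast
        linarith
      · have hUsub : U ⊆ S ∪ T' := subset_of_inter_compl_empty (Finset.card_eq_zero.mp hUout)
        by_cases hUdem : U ∈ DemB v p
        · have hUF : U ∈ F := hFmem U hUsub hUdem hxU
          have h1 : (t₀:ℝ) ≤ ((U ∩ R).card : ℝ) := by exact_mod_cast ht₀le U hUF
          have h2 : (t₀:ℝ) * δ ≤ ((U ∩ R).card : ℝ) * δ :=
            mul_le_mul_of_nonneg_right h1 (le_of_lt hδpos)
          have := hMx U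
          rw [if_neg hxU, hUout]
          push_cast
          linarith
        · have := hγle U hUdem
          rw [if_neg hxU, hUout]
          push_cast
          linarith
    · have h1 : (1:ℝ) ≤ ((U ∩ Out).card : ℝ) := by
        exact_mod_cast Nat.one_le_iff_ne_zero.mpr hUout
      have h2 : 0 ≤ (if x ∈ U then ε else 0) := by
        by_cases h : x ∈ U <;> simp [h, le_of_lt hεpos]
      have h6 : M₁ ≤ ((U ∩ Out).card : ℝ) * M₁ := le_mul_of_one_le_left (le_of_lt hM₁pos) h1
      have := hMx U
      linarith
  have hUminval : utilB v q Umin = Mx - (t₀ : ℝ) * δ := by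
    obtain ⟨hs, hd, hx'⟩ := hFprop Umin hUminF
    rw [hq, util_price3p, if_neg hx', hUminc]
    have : (Umin ∩ Out).card = 0 := by
      rw [Finset.card_eq_zero, Finset.eq_empty_iff_forall_notMem]
      intro g hg
      rw [Finset.mem_inter] at hg
      exact hOutS g (hs hg.1) hg.2
    rw [this, hdem_eq Umin hd]
    push_cast
    ring
  have hUmindem : Umin ∈ DemB v q := by
    intro U
    rw [hUminval]
    exact hqmax U
  obtain ⟨S', hS'q, hkeep⟩ := hGS p q hp hpq S hS
  have herase_sub : S.erase x ⊆ S' := by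
    intro g hg
    obtain ⟨hgx, hgS⟩ := Finset.mem_erase.mp hg
    apply hkeep g hgS
    rw [hq]
    have h1 : g ∉ R := fun h => hRS g h hgS
    have h2 : g ∉ Out := hOutS g (Finset.mem_union_left _ hgS)
    simp [hgx, h1, h2]
  have hS'val : utilB v q S' = Mx - (t₀ : ℝ) * δ := by
    apply le_antisymm (hqmax S')
    have := hS'q Umin
    rwa [hUminval] at this
  rw [hq, util_price3p] at hS'val
  -- extract structure of S'
  have hcRnn : (0:ℝ) ≤ ((S' ∩ R).card : ℝ) * δ := by positivity
  have hcOnn : (0:ℝ) ≤ ((S' ∩ Out).card : ℝ) * M₁ := by positivity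
  have hS'out : (S' ∩ Out).card = 0 := by
    by_contra h
    have h1 : (1:ℝ) ≤ ((S' ∩ Out).card : ℝ) := by
      exact_mod_cast Nat.one_le_iff_ne_zero.mpr h
    have h2 : 0 ≤ (if x ∈ S' then ε else 0) := by
      by_cases hh : x ∈ S' <;> simp [hh, le_of_lt hεpos]
    have h6 : M₁ ≤ ((S' ∩ Out).card : ℝ) * M₁ := le_mul_of_one_le_left (le_of_lt hM₁pos) h1
    have := hMx S'
    linarith
  have hS'sub : S' ⊆ S ∪ T' := subset_of_inter_compl_empty (Finset.card_eq_zero.mp hS'out)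
  have hxS' : x ∉ S' := by
    by_contra h
    rw [if_pos h, hS'out] at hS'val
    have := hMx S'
    push_cast at hS'val
    linarith
  have hS'dem : S' ∈ DemB v p := by
    by_contra h
    have := hγle S' h
    rw [if_neg hxS', hS'out] at hS'val
    push_cast at hS'val
    linarith
  have hS'F : S' ∈ F := hFmem S' hS'sub hS'dem hxS'
  have hS'card : (S' ∩ R).card = t₀ := by
    rw [if_neg hxS', hS'out, hdem_eq S' hS'dem] at hS'val
    push_cast at hS'val
    have h1 : ((S' ∩ R).card : ℝ) * δ = (t₀ : ℝ) * δ := by linarith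
    have h2 : ((S' ∩ R).card : ℝ) = (t₀ : ℝ) :=
      mul_right_cancel₀ (ne_of_gt hδpos) h1
    exact_mod_cast h2
  set W := S' ∩ R with hWdef
  have hWsub : W ⊆ R := Finset.inter_subset_right
  have hWS' : W ⊆ S' := Finset.inter_subset_left
  have hS'decomp : S' = (S.erase x) ∪ W := by
    apply Finset.Subset.antisymm
    · intro g hg
      rcases Finset.mem_union.mp (hS'sub hg) with h | h
      · apply Finset.mem_union_left
        rw [Finset.mem_erase]
        exact ⟨fun he => hxS' (he ▸ hg), h⟩
      · by_cases hgS : g ∈ S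
        · apply Finset.mem_union_left
          rw [Finset.mem_erase]
          exact ⟨fun he => hxS' (he ▸ hg), hgS⟩
        · apply Finset.mem_union_right
          rw [hWdef, Finset.mem_inter]
          exact ⟨hg, Finset.mem_sdiff.mpr ⟨h, hgS⟩⟩
    · exact Finset.union_subset herase_sub hWS'
  have hS'minusS : S' \ S = W := by
    apply Finset.Subset.antisymm
    · intro g hg
      obtain ⟨hg1, hg2⟩ := Finset.mem_sdiff.mp hg
      rcases Finset.mem_union.mp (hS'sub hg1) with h | h
      · exact absurd h hg2
      · rw [hWdef, Finset.mem_inter]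
        exact ⟨hg1, Finset.mem_sdiff.mpr ⟨h, hg2⟩⟩
    · intro g hg
      rw [Finset.mem_sdiff]
      exact ⟨hWS' hg, hRS g (hWsub hg)⟩
  -- case analysis on t₀
  rcases Nat.lt_or_ge t₀ 2 with h2 | h2
  · rcases (by omega : t₀ = 0 ∨ t₀ = 1) with h0 | h1
    · -- t₀ = 0 : S.erase x is demanded, contradiction with hA
      exfalso
      apply hA
      have hWe : W = ∅ := by
        rw [← Finset.card_eq_zero, hS'card, h0]
      rw [hWe, Finset.union_empty] at hS'decomp
      rwa [← hS'decomp]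
    · -- t₀ = 1 : single swap found
      left
      have hWc : W.card = 1 := by rw [hS'card, h1]
      obtain ⟨y, hy⟩ := Finset.card_eq_one.mp hWc
      have hyW : y ∈ W := by rw [hy]; exact Finset.mem_singleton_self y
      refine ⟨y, hRT (hWsub hyW), hRS y (hWsub hyW), ?_⟩
      have : insert y (S.erase x) = (S.erase x) ∪ W := by
        rw [hy, Finset.union_comm]
        exact Finset.insert_eq y (S.erase x)
      rw [this, ← hS'decomp]
      exact hS'dem
  · rcases eq_or_lt_of_le htR with heq | hlt
    swap
    · -- t₀ < |R| : recursion case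
      right
      exact ⟨S', hS'dem, hxS', by rw [hS'minusS]; exact hWsub,
        by rw [hS'minusS, hWdef, hS'card]; exact hlt, herase_sub⟩
    · -- ENDGAME : t₀ = |R| ≥ 2, derive contradiction
      exfalso
      have hstar : ∀ U ∈ F, R ⊆ U := by
        intro U hU
        have h1 : U ∩ R ⊆ R := Finset.inter_subset_right
        have h2 : R.card ≤ (U ∩ R).card := by rw [← heq]; exact ht₀le U hU
        have := Finset.eq_of_subset_of_card_le h1 h2
        intro g hg
        exact (Finset.mem_inter.mp (this ▸ hg)).1
      have hWR : W = R := by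
        apply Finset.eq_of_subset_of_card_le hWsub
        rw [hS'card, heq]
      have hRS' : R ⊆ S' := hWR ▸ hWS'
      obtain ⟨y, hyW, z, hzW, hyz⟩ := Finset.one_lt_card.mp (by rw [hS'card]; exact h2)
      have hyR : y ∈ R := hWsub hyW
      have hzR : z ∈ R := hWsub hzW
      have hyS : y ∉ S := hRS y hyR
      have hzS : z ∉ S := hRS z hzR
      have hxy : x ≠ y := fun h => hyS (h ▸ hxS)
      have hxz : x ≠ z := fun h => hzS (h ▸ hxS)
      set V := R \ ({y, z} : Finset (Fin m)) with hV
      have hVR : V ⊆ R := Finset.sdiff_subset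
      have hyV : y ∉ V := by rw [hV]; simp
      have hzV : z ∉ V := by rw [hV]; simp
      have hVS : ∀ g ∈ V, g ∉ S := fun g hg => hRS g (hVR hg)
      have hxV : x ∉ V := fun h => hVS x h hxS
      -- the "pull": show that S ∪ V is demanded
      set K := (S ∪ V).erase x with hK
      have hKne : (K.powerset).Nonempty := ⟨∅, Finset.empty_mem_powerset _⟩
      set B₀ := K.powerset.sup' hKne (utilB v p) with hB₀
      have hB₀lt : B₀ < Mx := by
        rw [hB₀, Finset.sup'_lt_iff]
        intro U hU
        rw [Finset.mem_powerset] at hU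
        have hxU : x ∉ U := by
          intro h
          exact (Finset.notMem_erase x _) (hK ▸ hU h)
        have hUS : U ⊆ S ∪ T' := by
          intro g hg
          have hg2 : g ∈ S ∪ V := Finset.mem_of_mem_erase (hK ▸ hU hg)
          rcases Finset.mem_union.mp hg2 with h | h
          · exact Finset.mem_union_left _ h
          · exact Finset.mem_union_right _ (hRT (hVR h))
        rcases lt_or_ge (utilB v p U) Mx with h | h
        · exact h
        · exfalso
          have hUMx : utilB v p U = Mx := le_antisymm (hMx U) h
          have hUF : U ∈ F := hFmem U hUS (hdem_of_eq U hUMx) hxU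
          have hyU : y ∈ U := hstar U hUF hyR
          have : y ∈ S ∪ V := Finset.mem_of_mem_erase (hK ▸ hU hyU)
          rcases Finset.mem_union.mp this with h' | h'
          exacts [hyS h', hyV h']
      set ε₂ := (Mx - B₀) / 2 with hε₂
      have hε₂pos : 0 < ε₂ := by rw [hε₂]; linarith
      set K₂ := Δ + ε₂ + 1 with hK₂
      have hK₂pos : 0 < K₂ := by rw [hK₂]; linarith
      clear_value B₀ ε₂ K₂
      set Kick := ({y, z} : Finset (Fin m)) ∪ Out with hKick
      set q₂ : Fin m → ℝ := fun g => p g + ((if g = x then ε₂ else 0) +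
          (if g ∈ Kick then K₂ else 0)) with hq₂
      have hpq₂ : ∀ g, p g ≤ q₂ g := by
        intro g; rw [hq₂]
        have h1 : 0 ≤ (if g = x then ε₂ else 0) := by
          by_cases h : g = x <;> simp [h, le_of_lt hε₂pos]
        have h2 : 0 ≤ (if g ∈ Kick then K₂ else 0) := by
          by_cases h : g ∈ Kick <;> simp [h, le_of_lt hK₂pos]
        simp only []
        linarith
      have hq₂0 : ∀ g, 0 ≤ q₂ g := fun g => le_trans (hp g) (hpq₂ g)
      have hsub_of_kick : ∀ U : Finset (Fin m), (U ∩ Kick).card = 0 → U ⊆ S ∪ V := by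
        intro U hU g hg
        have hnk : g ∉ Kick := by
          intro h
          have hmem : g ∈ U ∩ Kick := Finset.mem_inter.mpr ⟨hg, h⟩
          rw [Finset.card_eq_zero] at hU
          rw [hU] at hmem
          exact absurd hmem (Finset.notMem_empty g)
        rw [hKick, Finset.mem_union, not_or] at hnk
        obtain ⟨hnyz, hnout⟩ := hnk
        have hgST : g ∈ S ∪ T' := by
          by_contra h
          exact hnout (by rw [hOut, Finset.mem_sdiff]; exact ⟨Finset.mem_univ g, h⟩)
        rcases Finset.mem_union.mp hgST with h | h
        · exact Finset.mem_union_left _ h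
        · by_cases hgS : g ∈ S
          · exact Finset.mem_union_left _ hgS
          · apply Finset.mem_union_right
            rw [hV, Finset.mem_sdiff]
            exact ⟨Finset.mem_sdiff.mpr ⟨h, hgS⟩, hnyz⟩
      have hq₂max : ∀ U, utilB v q₂ U ≤ Mx - ε₂ := by
        intro U
        rw [hq₂, util_price2p]
        by_cases hkick : (U ∩ Kick).card = 0
        · have hUSV := hsub_of_kick U hkick
          by_cases hxU : x ∈ U
          · have := hMx U
            rw [if_pos hxU, hkick]
            push_cast
            linarith
          · have hUK : U ⊆ K := by
              intro g hg
              rw [hK, Finset.mem_erase]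
              exact ⟨fun he => hxU (he ▸ hg), hUSV hg⟩
            have hle : utilB v p U ≤ B₀ := by
              rw [hB₀]
              exact Finset.le_sup' _ (Finset.mem_powerset.mpr hUK)
            rw [if_neg hxU, hkick]
            push_cast
            linarith
        · have h1 : (1:ℝ) ≤ ((U ∩ Kick).card : ℝ) := by
            exact_mod_cast Nat.one_le_iff_ne_zero.mpr hkick
          have h2 : 0 ≤ (if x ∈ U then ε₂ else 0) := by
            by_cases h : x ∈ U <;> simp [h, le_of_lt hε₂pos]
          have h6 : K₂ ≤ ((U ∩ Kick).card : ℝ) * K₂ :=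
            le_mul_of_one_le_left (le_of_lt hK₂pos) h1
          have := hMx U
          linarith
      have hSkick : (S ∩ Kick).card = 0 := by
        rw [Finset.card_eq_zero, Finset.eq_empty_iff_forall_notMem]
        intro g hg
        obtain ⟨hg1, hg2⟩ := Finset.mem_inter.mp hg
        rw [hKick, Finset.mem_union] at hg2
        rcases hg2 with h | h
        · rcases Finset.mem_insert.mp h with h' | h'
          · exact hyS (h' ▸ hg1)
          · exact hzS ((Finset.mem_singleton.mp h') ▸ hg1)
        · exact hOutS g (Finset.mem_union_left _ hg1) h
      have hSq₂ : utilB v q₂ S = Mx - ε₂ := by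
        rw [hq₂, util_price2p, if_pos hxS, hSkick, hSMx]
        push_cast
        ring
      obtain ⟨Vh, hVhq₂, hkeep₂⟩ := hGS p q₂ hp hpq₂ S' hS'dem
      have hEVsub : (S.erase x) ∪ V ⊆ Vh := by
        intro g hg
        rcases Finset.mem_union.mp hg with h | h
        · obtain ⟨hgx, hgS⟩ := Finset.mem_erase.mp h
          apply hkeep₂ g (herase_sub h)
          rw [hq₂]
          have hgk : g ∉ Kick := by
            rw [hKick, Finset.mem_union, not_or]
            constructor
            · intro hk
              rcases Finset.mem_insert.mp hk with h' | h'
              · exact hyS (h' ▸ hgS)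
              · exact hzS ((Finset.mem_singleton.mp h') ▸ hgS)
            · exact hOutS g (Finset.mem_union_left _ hgS)
          simp [hgx, hgk]
        · have hgR : g ∈ R := hVR h
          apply hkeep₂ g (hRS' hgR)
          rw [hq₂]
          have hgx : g ≠ x := fun he => hxV (he ▸ h)
          have hgk : g ∉ Kick := by
            rw [hKick, Finset.mem_union, not_or]
            constructor
            · intro hk
              rcases Finset.mem_insert.mp hk with h' | h'
              · exact hyV (h' ▸ h)
              · exact hzV ((Finset.mem_singleton.mp h') ▸ h)
            · exact hOutS g (Finset.mem_union_right _ (hRT hgR))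
          simp [hgx, hgk]
      have hVhval : utilB v q₂ Vh = Mx - ε₂ := by
        apply le_antisymm (hq₂max Vh)
        have := hVhq₂ S
        rwa [hSq₂] at this
      rw [hq₂, util_price2p] at hVhval
      have hVhkick : (Vh ∩ Kick).card = 0 := by
        by_contra h
        have h1 : (1:ℝ) ≤ ((Vh ∩ Kick).card : ℝ) := by
          exact_mod_cast Nat.one_le_iff_ne_zero.mpr h
        have h2 : 0 ≤ (if x ∈ Vh then ε₂ else 0) := by
          by_cases hh : x ∈ Vh <;> simp [hh, le_of_lt hε₂pos]
        have h6 : K₂ ≤ ((Vh ∩ Kick).card : ℝ) * K₂ :=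
          le_mul_of_one_le_left (le_of_lt hK₂pos) h1
        have := hMx Vh
        linarith
      have hVhsub : Vh ⊆ S ∪ V := hsub_of_kick Vh hVhkick
      have hxVh : x ∈ Vh := by
        by_contra hxVh
        have hVhK : Vh ⊆ K := by
          intro g hg
          rw [hK, Finset.mem_erase]
          exact ⟨fun he => hxVh (he ▸ hg), hVhsub hg⟩
        have hle : utilB v p Vh ≤ B₀ := by
          rw [hB₀]
          exact Finset.le_sup' _ (Finset.mem_powerset.mpr hVhK)
        rw [if_neg hxVh, hVhkick] at hVhval
        push_cast at hVhval
        linarith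
      have hVhMx : utilB v p Vh = Mx := by
        rw [if_pos hxVh, hVhkick] at hVhval
        push_cast at hVhval
        linarith
      have hVheq : Vh = S ∪ V := by
        apply Finset.Subset.antisymm hVhsub
        intro g hg
        rcases Finset.mem_union.mp hg with h | h
        · by_cases hgx : g = x
          · exact hgx ▸ hxVh
          · exact hEVsub (Finset.mem_union_left _ (Finset.mem_erase.mpr ⟨hgx, h⟩))
        · exact hEVsub (Finset.mem_union_right _ h)
      have hSVMx : utilB v p (S ∪ V) = Mx := hVheq ▸ hVhMx
      -- the triple finale
      set A := (S.erase x) ∪ V with hAdef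
      have hxA : x ∉ A := by
        rw [hAdef, Finset.mem_union, not_or]
        exact ⟨Finset.notMem_erase x S, hxV⟩
      have hyA : y ∉ A := by
        rw [hAdef, Finset.mem_union, not_or]
        refine ⟨fun h => hyS (Finset.mem_of_mem_erase h), hyV⟩
      have hzA : z ∉ A := by
        rw [hAdef, Finset.mem_union, not_or]
        refine ⟨fun h => hzS (Finset.mem_of_mem_erase h), hzV⟩
      have ht := tripleU hmono hempty hGS p (A := A) hxA hyA hzA hxy hxz hyz
      have hid1 : insert z (insert y A) = (S.erase x) ∪ R := by
        rw [hAdef, hV]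
        ext g
        simp only [Finset.mem_insert, Finset.mem_union, Finset.mem_erase, Finset.mem_sdiff,
          Finset.mem_singleton]
        constructor
        · rintro (rfl | rfl | (h | ⟨h1, _⟩))
          · exact Or.inr hzR
          · exact Or.inr hyR
          · exact Or.inl h
          · exact Or.inr h1
        · rintro (h | hRg)
          · exact Or.inr (Or.inr (Or.inl h))
          · by_cases hgy : g = y
            · exact Or.inr (Or.inl hgy)
            · by_cases hgz : g = z
              · exact Or.inl hgz
              · exact Or.inr (Or.inr (Or.inr ⟨hRg, not_or.mpr ⟨hgy, hgz⟩⟩))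
      have hid3 : insert x A = S ∪ V := by
        rw [hAdef]
        ext g
        simp only [Finset.mem_insert, Finset.mem_union, Finset.mem_erase]
        constructor
        · rintro (rfl | (⟨_, h⟩ | h))
          · exact Or.inl hxS
          · exact Or.inl h
          · exact Or.inr h
        · rintro (h | h)
          · by_cases hgx : g = x
            · exact Or.inl hgx
            · exact Or.inr (Or.inl ⟨hgx, h⟩)
          · exact Or.inr (Or.inr h)
      have hidz : insert z A = (S.erase x) ∪ (R.erase y) := by
        rw [hAdef, hV]
        ext g
        simp only [Finset.mem_insert, Finset.mem_union, Finset.mem_erase, Finset.mem_sdiff,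
          Finset.mem_singleton]
        constructor
        · rintro (rfl | (h | ⟨h1, h2⟩))
          · exact Or.inr ⟨Ne.symm hyz, hzR⟩
          · exact Or.inl h
          · rw [not_or] at h2
            exact Or.inr ⟨h2.1, h1⟩
        · rintro (h | ⟨hgy, hgR⟩)
          · exact Or.inr (Or.inl h)
          · by_cases hgz : g = z
            · exact Or.inl hgz
            · exact Or.inr (Or.inr ⟨hgR, not_or.mpr ⟨hgy, hgz⟩⟩)
      have hidy : insert y A = (S.erase x) ∪ (R.erase z) := by
        rw [hAdef, hV]
        ext g
        simp only [Finset.mem_insert, Finset.mem_union, Finset.mem_erase, Finset.mem_sdiff,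
          Finset.mem_singleton]
        constructor
        · rintro (rfl | (h | ⟨h1, h2⟩))
          · exact Or.inr ⟨hyz, hyR⟩
          · exact Or.inl h
          · rw [not_or] at h2
            exact Or.inr ⟨h2.2, h1⟩
        · rintro (h | ⟨hgz, hgR⟩)
          · exact Or.inr (Or.inl h)
          · by_cases hgy : g = y
            · exact Or.inl hgy
            · exact Or.inr (Or.inr ⟨hgR, not_or.mpr ⟨hgy, hgz⟩⟩)
      have hS'Mx : utilB v p ((S.erase x) ∪ R) = Mx := by
        rw [← hWR, ← hS'decomp]
        exact hdem_eq S' hS'dem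
      have hzMx : utilB v p ((S.erase x) ∪ (R.erase y)) < Mx := by
        rcases lt_or_ge (utilB v p ((S.erase x) ∪ (R.erase y))) Mx with h | h
        · exact h
        · exfalso
          have hUMx : utilB v p _ = Mx := le_antisymm (hMx _) h
          have hUF : (S.erase x) ∪ (R.erase y) ∈ F := by
            apply hFmem
            · apply Finset.union_subset
              · exact (Finset.erase_subset _ _).trans Finset.subset_union_left
              · exact ((Finset.erase_subset _ _).trans hRT).trans Finset.subset_union_right
            · exact hdem_of_eq _ hUMx
            · rw [Finset.mem_union, not_or]
              exact ⟨Finset.notMem_erase x S, fun h' => hxR (Finset.mem_of_mem_erase h')⟩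
          have := hstar _ hUF hyR
          rcases Finset.mem_union.mp this with h' | h'
          · exact hyS (Finset.mem_of_mem_erase h')
          · exact (Finset.notMem_erase y R) h'
      have hyMx : utilB v p ((S.erase x) ∪ (R.erase z)) < Mx := by
        rcases lt_or_ge (utilB v p ((S.erase x) ∪ (R.erase z))) Mx with h | h
        · exact h
        · exfalso
          have hUMx : utilB v p _ = Mx := le_antisymm (hMx _) h
          have hUF : (S.erase x) ∪ (R.erase z) ∈ F := by
            apply hFmem
            · apply Finset.union_subset
              · exact (Finset.erase_subset _ _).trans Finset.subset_union_left
              · exact ((Finset.erase_subset _ _).trans hRT).trans Finset.subset_union_right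
            · exact hdem_of_eq _ hUMx
            · rw [Finset.mem_union, not_or]
              exact ⟨Finset.notMem_erase x S, fun h' => hxR (Finset.mem_of_mem_erase h')⟩
          have := hstar _ hUF hzR
          rcases Finset.mem_union.mp this with h' | h'
          · exact hzS (Finset.mem_of_mem_erase h')
          · exact (Finset.notMem_erase z R) h'
      rw [hid1, hid3, hidz, hidy] at ht
      rw [hS'Mx, hSVMx] at ht
      rcases le_max_iff.mp ht with h | h
      · have := hMx (insert x ((S.erase x) ∪ (R.erase z)))
        linarith
      · have := hMx (insert x ((S.erase x) ∪ (R.erase y)))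
        linarith


include hmono hempty hGS in
/-- The "no complementarities" exchange property for demanded bundles -/
lemma exchangeNC {p : Fin m → ℝ} (hp : ∀ g, 0 ≤ p g) {S T : Finset (Fin m)}
    (hS : S ∈ DemB v p) (hT : T ∈ DemB v p) {x : Fin m} (hxS : x ∈ S) (hxT : x ∉ T) :
    S.erase x ∈ DemB v p ∨ ∃ y, y ∈ T ∧ y ∉ S ∧ insert y (S.erase x) ∈ DemB v p := by
  classical
  by_cases hA : S.erase x ∈ DemB v p
  · exact Or.inl hA
  right
  set Mx := utilB v p S with hMxdef
  have hMx : ∀ U, utilB v p U ≤ Mx := fun U => hS U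
  have hSMx : utilB v p S = Mx := rfl
  set NM := (univ : Finset (Finset (Fin m))).filter (fun U => U ∉ DemB v p) with hNM
  have hNMne : NM.Nonempty :=
    ⟨S.erase x, by rw [hNM, Finset.mem_filter]; exact ⟨Finset.mem_univ _, hA⟩⟩
  set β := NM.sup' hNMne (utilB v p) with hβ
  have hβlt : β < Mx := by
    rw [hβ, Finset.sup'_lt_iff]
    intro U hU
    rw [hNM, Finset.mem_filter] at hU
    have h2 := hU.2
    simp only [DemB, Set.mem_setOf_eq] at h2
    push_neg at h2
    obtain ⟨T'', hT''⟩ := h2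
    exact lt_of_lt_of_le hT'' (hMx T'')
  set γ := Mx - β with hγdef
  have hγ : 0 < γ := by rw [hγdef]; linarith
  have hγle : ∀ U, U ∉ DemB v p → utilB v p U ≤ Mx - γ := by
    intro U hU
    have h1 : utilB v p U ≤ β := Finset.le_sup' _
      (by rw [hNM, Finset.mem_filter]; exact ⟨Finset.mem_univ _, hU⟩)
    rw [hγdef]; linarith
  set Δ := Mx - (univ : Finset (Finset (Fin m))).inf' ⟨S, Finset.mem_univ S⟩ (utilB v p)
    with hΔdef
  have hΔ : ∀ U, Mx - Δ ≤ utilB v p U := by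
    intro U
    have := Finset.inf'_le (utilB v p) (Finset.mem_univ U)
    rw [hΔdef]; linarith
  have MAIN : ∀ n : ℕ, ∀ T' : Finset (Fin m), T' ∈ DemB v p → x ∉ T' → (T' \ S).card ≤ n →
      ∃ y, y ∈ T' ∧ y ∉ S ∧ insert y (S.erase x) ∈ DemB v p := by
    intro n
    induction n with
    | zero =>
      intro T' hT' hxT' hc
      rcases step hmono hempty hGS hp hS hxS hMx hSMx hγ hγle hΔ hA hT' hxT' with
        h | ⟨S', _, _, _, hlt, _⟩
      · exact h
      · omega
    | succ n ih =>
      intro T' hT' hxT' hc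
      rcases step hmono hempty hGS hp hS hxS hMx hSMx hγ hγle hΔ hA hT' hxT' with
        h | ⟨S', hS'dem, hxS', hsub, hlt, _⟩
      · exact h
      · obtain ⟨y, hy1, hy2, hy3⟩ := ih S' hS'dem hxS' (by omega)
        have : y ∈ T' \ S := hsub (Finset.mem_sdiff.mpr ⟨hy1, hy2⟩)
        exact ⟨y, (Finset.mem_sdiff.mp this).1, hy2, hy3⟩
  exact MAIN (T \ S).card T hT hxT le_rfl

variable {p : Fin m → ℝ}

/-- every demanded bundle contains a minimal demanded bundle -/
lemma exists_min (hp : True) :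
    ∀ n : ℕ, ∀ U : Finset (Fin m), U.card ≤ n → U ∈ DemB v p →
      ∃ B, B ∈ DstarB v p ∧ B ⊆ U := by
  classical
  intro n
  induction n with
  | zero =>
    intro U hc hU
    refine ⟨U, ⟨hU, ?_⟩, subset_rfl⟩
    intro T hT
    exfalso
    have := Finset.card_lt_card hT
    omega
  | succ n ih =>
    intro U hc hU
    by_cases hmin : ∀ T ⊂ U, T ∉ DemB v p
    · exact ⟨U, ⟨hU, hmin⟩, subset_rfl⟩
    · push_neg at hmin
      obtain ⟨T, hTU, hT⟩ := hmin
      have hcard := Finset.card_lt_card hTU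
      obtain ⟨B, hB, hBT⟩ := ih T (by omega) hT
      exact ⟨B, hB, hBT.trans (subset_of_ssubset hTU)⟩

include hmono hempty hGS in
/-- reduction towards a fixed demanded bundle -/
lemma down (hp : ∀ g, 0 ≤ p g) {B : Finset (Fin m)} (hB : B ∈ DemB v p) :
    ∀ n : ℕ, ∀ U : Finset (Fin m), U ∈ DemB v p → (U \ B).card ≤ n →
      ∃ U', U' ∈ DemB v p ∧ U' ⊆ B ∧ U'.card ≤ U.card := by
  classical
  intro n
  induction n with
  | zero =>
    intro U hU hc
    refine ⟨U, hU, ?_, le_rfl⟩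
    rw [Nat.le_zero, Finset.card_eq_zero, Finset.sdiff_eq_empty_iff_subset] at hc
    exact hc
  | succ n ih =>
    intro U hU hc
    by_cases hsub : U ⊆ B
    · exact ⟨U, hU, hsub, le_rfl⟩
    · obtain ⟨x, hx⟩ := Finset.sdiff_nonempty.mpr hsub
      obtain ⟨hxU, hxB⟩ := Finset.mem_sdiff.mp hx
      have herase_id : (U.erase x) \ B = (U \ B).erase x := by
        ext g
        simp only [Finset.mem_sdiff, Finset.mem_erase]
        tauto
      have hceq : ((U \ B).erase x).card = (U \ B).card - 1 := Finset.card_erase_of_mem hx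
      have hc1 : (U \ B).card ≥ 1 := Finset.card_pos.mpr ⟨x, hx⟩
      rcases exchangeNC hmono hempty hGS hp hU hB hxU hxB with h | ⟨y, hyB, hyU, hins⟩
      · obtain ⟨U', h1, h2, h3⟩ := ih (U.erase x) h (by rw [herase_id]; omega)
        exact ⟨U', h1, h2, h3.trans (Finset.card_le_card (Finset.erase_subset _ _))⟩
      · set U₂ := insert y (U.erase x) with hU₂
        have hyNE : y ∉ U.erase x := fun h' => hyU (Finset.mem_of_mem_erase h')
        have hU₂c : U₂.card = U.card := by
          rw [hU₂, Finset.card_insert_of_notMem hyNE, Finset.card_erase_of_mem hxU]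
          have : U.card ≥ 1 := Finset.card_pos.mpr ⟨x, hxU⟩
          omega
        have hU₂diff : U₂ \ B = (U \ B).erase x := by
          rw [hU₂]
          ext g
          simp only [Finset.mem_sdiff, Finset.mem_erase, Finset.mem_insert]
          constructor
          · rintro ⟨(rfl | ⟨h1, h2⟩), h3⟩
            · exact absurd hyB h3
            · exact ⟨h1, h2, h3⟩
          · rintro ⟨h1, h2, h3⟩
            exact ⟨Or.inr ⟨h1, h2⟩, h3⟩
        obtain ⟨U', h1, h2, h3⟩ := ih U₂ hins (by rw [hU₂diff]; omega)
        exact ⟨U', h1, h2, by omega⟩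

include hmono hempty hGS in
/-- all minimal demanded bundles have the same cardinality -/
lemma eqcard (hp : ∀ g, 0 ≤ p g) {B₁ B₂ : Finset (Fin m)}
    (h1 : B₁ ∈ DstarB v p) (h2 : B₂ ∈ DstarB v p) : B₁.card = B₂.card := by
  classical
  have key : ∀ C₁ C₂ : Finset (Fin m), C₁ ∈ DstarB v p → C₂ ∈ DstarB v p →
      C₁.card ≤ C₂.card := by
    intro C₁ C₂ hC₁ hC₂
    obtain ⟨U', hU'dem, hU'sub, hU'c⟩ :=
      down hmono hempty hGS hp hC₁.1 (C₂ \ C₁).card C₂ hC₂.1 le_rfl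
    have : U' = C₁ := by
      by_contra hne
      exact hC₁.2 U' (Finset.ssubset_iff_subset_ne.mpr ⟨hU'sub, hne⟩) hU'dem
    rw [← this]
    exact hU'c
  exact le_antisymm (key B₁ B₂ h1 h2) (key B₂ B₁ h2 h1)

include hmono hempty hGS in
/-- exchange property for minimal demanded bundles -/
lemma dstar_exchange (hp : ∀ g, 0 ≤ p g) {B₁ B₂ : Finset (Fin m)}
    (h1 : B₁ ∈ DstarB v p) (h2 : B₂ ∈ DstarB v p) {x : Fin m}
    (hx1 : x ∈ B₁) (hx2 : x ∉ B₂) :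
    ∃ y, y ∈ B₂ ∧ y ∉ B₁ ∧ insert y (B₁.erase x) ∈ DstarB v p := by
  classical
  rcases exchangeNC hmono hempty hGS hp h1.1 h2.1 hx1 hx2 with h | ⟨y, hyB₂, hyB₁, hins⟩
  · exfalso
    exact h1.2 (B₁.erase x) (Finset.erase_ssubset hx1) h
  · refine ⟨y, hyB₂, hyB₁, hins, ?_⟩
    -- minimality of the exchanged bundle
    intro T hT hTdem
    have hyNE : y ∉ B₁.erase x := fun h' => hyB₁ (Finset.mem_of_mem_erase h')
    have hcard : (insert y (B₁.erase x)).card = B₁.card := by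
      rw [Finset.card_insert_of_notMem hyNE, Finset.card_erase_of_mem hx1]
      have : B₁.card ≥ 1 := Finset.card_pos.mpr ⟨x, hx1⟩
      omega
    obtain ⟨B₃, hB₃, hB₃T⟩ := exists_min (v := v) (p := p) trivial T.card T le_rfl hTdem
    have hB₃c : B₃.card = B₁.card := eqcard hmono hempty hGS hp hB₃ h1
    have hlt : B₃.card < (insert y (B₁.erase x)).card :=
      Finset.card_lt_card (lt_of_le_of_lt hB₃T hT)
    omega

include hmono hempty hGS in
lemma demB_nonempty (hp : ∀ g, 0 ≤ p g) : ∃ S, S ∈ DemB v p := by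
  classical
  obtain ⟨U, _, hU⟩ := Finset.exists_max_image (univ : Finset (Finset (Fin m)))
    (utilB v p) ⟨∅, Finset.mem_univ ∅⟩
  exact ⟨U, fun T => hU T (Finset.mem_univ T)⟩

end GSAux

/-- for a monotone gross substitutes valuation and any nonnegative price
vector, the minimum demand correspondence is the set of bases of a matroid on the
ground set of all goods. -/
theorem stmt11 (m : ℕ) (v : Finset (Fin m) → ℝ)
    (hmono : ∀ A B : Finset (Fin m), A ⊆ B → v A ≤ v B)
    (hempty : v ∅ = 0) (hGS : GrossSubstitutes v)
    (p : Fin m → ℝ) (hp : ∀ g, 0 ≤ p g) :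
    ∃ M : Matroid (Fin m), M.E = Set.univ ∧
      ∀ B : Finset (Fin m), M.IsBase ↑B ↔ B ∈ DstarB v p := by
  classical
  obtain ⟨S₀, hS₀⟩ := GSAux.demB_nonempty hmono hempty hGS hp
  obtain ⟨B₀, hB₀, _⟩ := GSAux.exists_min (v := v) (p := p) trivial S₀.card S₀ le_rfl hS₀
  set Base : Set (Fin m) → Prop :=
    fun Bs => ∃ B₀ : Finset (Fin m), Bs = ↑B₀ ∧ B₀ ∈ DstarB v p with hBase
  have hex : ∃ Bs, Base Bs := ⟨↑B₀, B₀, rfl, hB₀⟩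
  have hexch : Matroid.ExchangeProperty Base := by
    intro X Y hX hY a ha
    obtain ⟨B₁, rfl, hB₁⟩ := hX
    obtain ⟨B₂, rfl, hB₂⟩ := hY
    rw [Set.mem_diff] at ha
    have ha1 : a ∈ B₁ := by exact_mod_cast ha.1
    have ha2 : a ∉ B₂ := by
      intro h; exact ha.2 (by exact_mod_cast h)
    obtain ⟨y, hy1, hy2, hy3⟩ :=
      GSAux.dstar_exchange hmono hempty hGS hp hB₁ hB₂ ha1 ha2
    refine ⟨y, ?_, insert y (B₁.erase a), ?_, hy3⟩
    · rw [Set.mem_diff]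
      constructor
      · exact_mod_cast hy1
      · intro h; exact hy2 (by exact_mod_cast h)
    · rw [Finset.coe_insert, Finset.coe_erase]
  have hground : ∀ Bs, Base Bs → Bs ⊆ Set.univ := fun _ _ => Set.subset_univ _
  refine ⟨Matroid.ofIsBaseOfFinite Set.finite_univ Base hex hexch hground, rfl, ?_⟩
  intro B
  rw [Matroid.ofIsBaseOfFinite_isBase]
  constructor
  · rintro ⟨B', hB'eq, hB'⟩
    rwa [Finset.coe_inj.mp hB'eq]
  · intro h
    exact ⟨B, rfl, h⟩

end
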